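/- Let A_FF be a real symmetric n×n matrix with strictly positive diagonal entries that is η-diagonally dominant for some real η with 1/2 < η ≤ 1; that is, for every index i, A_ii ≥ η·Σ_j |A_ij| (the sum over all j, including j = i). Let D be the diagonal matrix with entries D_ii = (2 - 1/η)·A_ii and set E := A_FF - D. Then ((2-2η)/(2η-1))·D - E is positive semidefinite, i.e., E ⪯ ((2-2η)/(2η-1))·D. -/

import Mathlib

open Matrix Finset

lemma psd_of_dd {n : Type*} [Fintype n] [DecidableEq n]
    (M : Matrix n n ℝ) (hsym : Mᵀ = M)
    (hdd : ∀ i, ∑ j ∈ Finset.univ.erase i, |M i j| ≤ M i i) :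
    M.PosSemidef := by
  rw [Matrix.posSemidef_iff_dotProduct_mulVec]
  constructor
  · show Mᴴ = M
    simpa using hsym
  · intro x
    have hMsym : ∀ i j, M j i = M i j := fun i j => by
      rw [← Matrix.transpose_apply M i j, hsym]
    show (0:ℝ) ≤ star x ⬝ᵥ M *ᵥ x
    have hx : star x = x := by simp
    rw [hx]
    have hQ : x ⬝ᵥ M *ᵥ x = ∑ i, ∑ j, x i * M i j * x j := by
      simp [dotProduct, mulVec, Finset.mul_sum, mul_assoc, mul_left_comm]
    rw [hQ]
    set h1 : n → n → ℝ := fun i j =>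
      if i = j then M i i * x i ^ 2 / 2 else -(|M i j| * x i ^ 2 / 2) with hh1
    set h2 : n → n → ℝ := fun i j =>
      if i = j then M i i * x i ^ 2 / 2 else -(|M i j| * x j ^ 2 / 2) with hh2
    have hterm : ∀ i j, h1 i j + h2 i j ≤ x i * M i j * x j := by
      intro i j
      by_cases hij : i = j
      · subst hij; simp [hh1, hh2]; ring_nf; nlinarith [sq_nonneg (x i)]
      · simp only [hh1, hh2, if_neg hij]
        have h2ab : |M i j| * (2 * (|x i| * |x j|)) ≤ |M i j| * (x i ^ 2 + x j ^ 2) := by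
          apply mul_le_mul_of_nonneg_left _ (abs_nonneg _)
          nlinarith [sq_nonneg (|x i| - |x j|), sq_abs (x i), sq_abs (x j)]
        have habs : |x i * M i j * x j| ≤ |M i j| * (x i ^ 2 + x j ^ 2) / 2 := by
          rw [abs_mul, abs_mul]
          nlinarith [h2ab]
        have := neg_abs_le (x i * M i j * x j)
        nlinarith
    have hswap : ∑ i, ∑ j, h2 i j = ∑ i, ∑ j, h1 i j := by
      rw [Finset.sum_comm]
      refine Finset.sum_congr rfl fun i _ => Finset.sum_congr rfl fun j _ => ?_
      simp only [hh1, hh2, hMsym j i, eq_comm (a := j) (b := i)]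
      by_cases h : i = j
      · subst h; simp
      · simp [h]
    have hrow : ∀ i, 0 ≤ ∑ j, h1 i j := by
      intro i
      have : ∑ j, h1 i j = M i i * x i ^ 2 / 2
          + ∑ j ∈ Finset.univ.erase i, -(|M i j| * x i ^ 2 / 2) := by
        rw [← Finset.add_sum_erase _ _ (Finset.mem_univ i)]
        congr 1
        · simp [hh1]
        · refine Finset.sum_congr rfl fun j hj => ?_
          have : i ≠ j := fun h => (Finset.mem_erase.mp hj).1 h.symm
          simp [hh1, this]
      rw [this, Finset.sum_neg_distrib]
      have hsum : ∑ j ∈ Finset.univ.erase i, |M i j| * x i ^ 2 / 2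
          = (∑ j ∈ Finset.univ.erase i, |M i j|) * x i ^ 2 / 2 := by
        rw [Finset.sum_mul, Finset.sum_div]
      rw [hsum]
      have := hdd i
      nlinarith [sq_nonneg (x i), Finset.sum_nonneg (fun j (_ : j ∈ Finset.univ.erase i) => abs_nonneg (M i j))]
    calc (0:ℝ) ≤ ∑ i, ∑ j, (h1 i j + h2 i j) := by
          simp only [Finset.sum_add_distrib, hswap]
          have := Finset.sum_nonneg (fun i (_ : i ∈ (Finset.univ : Finset n)) => hrow i)
          linarith
      _ ≤ ∑ i, ∑ j, x i * M i j * x j :=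
          Finset.sum_le_sum fun i _ => Finset.sum_le_sum fun j _ => hterm i j

/-- If the symmetric matrix `A_FF` with positive diagonal is `η`-diagonally
dominant for some `1/2 < η ≤ 1`, then `E := A_FF - D` with
`D = diagonal ((2 - 1/η) * A_ii)` satisfies `E ⪯ ((2-2η)/(2η-1)) • D`. -/
theorem amgr_upper_bound_posSemidef
    {n : Type*} [Fintype n] [DecidableEq n]
    (A : Matrix n n ℝ) (hsym : Aᵀ = A)
    (hdiag : ∀ i, 0 < A i i)
    (η : ℝ) (hη₁ : 1 / 2 < η) (hη₂ : η ≤ 1)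
    (hdd : ∀ i, η * ∑ j, |A i j| ≤ A i i)
    (D : Matrix n n ℝ)
    (hD : D = Matrix.diagonal (fun i => (2 - 1 / η) * A i i)) :
    (((2 - 2 * η) / (2 * η - 1)) • D - (A - D)).PosSemidef := by
  have hη0 : 0 < η := by linarith
  have hη21 : (2 * η - 1) ≠ 0 := by intro h; nlinarith
  have hM : ((2 - 2 * η) / (2 * η - 1)) • D - (A - D)
      = Matrix.diagonal (fun i => A i i / η) - A := by
    subst hD
    ext i j
    by_cases h : i = j
    · subst h
      simp only [Matrix.sub_apply, Matrix.smul_apply, Matrix.diagonal_apply_eq,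
        smul_eq_mul]
      field_simp
      ring
    · simp [Matrix.sub_apply, Matrix.diagonal_apply_ne _ h, h]
  rw [hM]
  apply psd_of_dd
  · rw [Matrix.transpose_sub, Matrix.diagonal_transpose, hsym]
  · intro i
    have hrow : ∑ j ∈ Finset.univ.erase i, |(Matrix.diagonal (fun k => A k k / η) - A) i j|
        = ∑ j ∈ Finset.univ.erase i, |A i j| := by
      refine Finset.sum_congr rfl fun j hj => ?_
      have hne : i ≠ j := fun h => (Finset.mem_erase.mp hj).1 h.symm
      simp [Matrix.sub_apply, Matrix.diagonal_apply_ne _ hne]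
    rw [hrow]
    have hdiagM : (Matrix.diagonal (fun k => A k k / η) - A) i i = A i i / η - A i i := by
      simp [Matrix.sub_apply]
    rw [hdiagM]
    have hsplit : ∑ j, |A i j| = |A i i| + ∑ j ∈ Finset.univ.erase i, |A i j| :=
      (Finset.add_sum_erase _ _ (Finset.mem_univ i)).symm
    have hAii : |A i i| = A i i := abs_of_pos (hdiag i)
    have h1 : η * ∑ j, |A i j| ≤ A i i := hdd i
    rw [hsplit, hAii] at h1
    have : ∑ j ∈ Finset.univ.erase i, |A i j| ≤ A i i / η - A i i := by
      rw [le_sub_iff_add_le, le_div_iff₀ hη0]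
      nlinarith
    linarith
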